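/- For any real θ and natural numbers n, k with 0 ≤ k < 2n+1, the average (1/(2n+1)) ∑_{ℓ=0}^{2n} (cos((θ+2πℓ)/(2n+1)))^{2k} equals (1/4^k)·C(2k,k). -/

import Mathlib

set_option maxHeartbeats 1000000

open Real Finset

theorem stmt_10 (θ : ℝ) (n k : ℕ) (hk : k < 2 * n + 1) :
    (1 / (2 * n + 1 : ℝ)) * ∑ ℓ ∈ Finset.range (2 * n + 1),
        (Real.cos ((θ + 2 * Real.pi * ℓ) / (2 * n + 1))) ^ (2 * k)
      = (1 / 4 ^ k) * (Nat.choose (2 * k) k : ℝ) := by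
  have hNR : (2*(n:ℝ)+1) ≠ 0 := by positivity
  have hNC : (2*(n:ℂ)+1) ≠ 0 := by
    intro h
    have : (2*(n:ℝ)+1 : ℂ) = 0 := by push_cast at h ⊢; exact h
    exact hNR (by exact_mod_cast this)
  have hpi : (Real.pi : ℂ) ≠ 0 := by exact_mod_cast Real.pi_ne_zero
  -- complex key lemma
  have key : ∑ ℓ ∈ Finset.range (2 * n + 1),
      Complex.cos (((θ:ℂ) + 2 * (Real.pi:ℂ) * ℓ) / (2 * (n:ℂ) + 1)) ^ (2 * k)
      = (2*(n:ℂ)+1) * ((1/4^k) * (Nat.choose (2*k) k : ℂ)) := by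
    -- expand each cosine power
    have expand : ∀ ℓ : ℕ,
        Complex.cos (((θ:ℂ) + 2 * (Real.pi:ℂ) * ℓ) / (2 * (n:ℂ) + 1)) ^ (2 * k)
        = (1/4^k) * ∑ j ∈ Finset.range (2*k+1), (Nat.choose (2*k) j : ℂ) *
            Complex.exp ((((θ:ℂ) + 2 * (Real.pi:ℂ) * ℓ) / (2 * (n:ℂ) + 1)) * Complex.I *
              (2*(j:ℂ) - 2*(k:ℂ))) := by
      intro ℓ
      set z : ℂ := ((θ:ℂ) + 2 * (Real.pi:ℂ) * ℓ) / (2 * (n:ℂ) + 1) with hz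
      have hcos : Complex.cos z = (Complex.exp (z*Complex.I) + Complex.exp (-z*Complex.I))/2 := by
        rw [Complex.cos]
      rw [hcos, div_pow, add_pow]
      rw [Finset.sum_div, Finset.mul_sum]
      apply Finset.sum_congr rfl
      intro j hj
      have hj' : j ≤ 2*k := Nat.lt_succ_iff.mp (Finset.mem_range.mp hj)
      rw [← Complex.exp_nat_mul, ← Complex.exp_nat_mul, ← Complex.exp_add]
      have harg : (j:ℂ) * (z*Complex.I) + ((2*k - j : ℕ):ℂ) * (-z*Complex.I)
          = z * Complex.I * (2*(j:ℂ) - 2*(k:ℂ)) := by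
        push_cast [Nat.cast_sub hj']
        ring
      rw [harg]
      have h4 : ((2:ℂ))^(2*k) = 4^k := by rw [pow_mul]; norm_num
      rw [h4]
      ring
    simp only [expand]
    rw [← Finset.mul_sum, Finset.sum_comm]
    -- inner sum over ℓ for fixed j
    have inner : ∀ j ∈ Finset.range (2*k+1),
        (∑ ℓ ∈ Finset.range (2*n+1), (Nat.choose (2*k) j : ℂ) *
          Complex.exp ((((θ:ℂ) + 2 * (Real.pi:ℂ) * ℓ) / (2 * (n:ℂ) + 1)) * Complex.I *
            (2*(j:ℂ) - 2*(k:ℂ))))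
        = if j = k then (2*(n:ℂ)+1) * (Nat.choose (2*k) k : ℂ) else 0 := by
      intro j hj
      have hj' : j ≤ 2*k := Nat.lt_succ_iff.mp (Finset.mem_range.mp hj)
      by_cases hjk : j = k
      · subst hjk
        simp only [sub_self, mul_zero, Complex.exp_zero, mul_one]
        simp [Finset.sum_const, mul_comm]
      · simp only [if_neg hjk]
        set m : ℂ := 2*(j:ℂ) - 2*(k:ℂ) with hm
        have hsplit : ∀ ℓ : ℕ,
            Complex.exp ((((θ:ℂ) + 2 * (Real.pi:ℂ) * ℓ) / (2 * (n:ℂ) + 1)) * Complex.I * m)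
            = Complex.exp ((θ:ℂ) * Complex.I * m / (2*(n:ℂ)+1)) *
              (Complex.exp (2 * (Real.pi:ℂ) * Complex.I * m / (2*(n:ℂ)+1)))^ℓ := by
          intro ℓ
          rw [← Complex.exp_nat_mul, ← Complex.exp_add]
          congr 1
          field_simp
        simp only [hsplit]
        rw [← Finset.mul_sum, ← Finset.mul_sum]
        set ω : ℂ := Complex.exp (2 * (Real.pi:ℂ) * Complex.I * m / (2*(n:ℂ)+1)) with hω
        have hωN : ω ^ (2*n+1) = 1 := by
          rw [hω, ← Complex.exp_nat_mul, Complex.exp_eq_one_iff]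
          refine ⟨2*(j:ℤ) - 2*(k:ℤ), ?_⟩
          rw [hm]
          push_cast
          rw [mul_div_assoc', mul_div_cancel_left₀ _ hNC]
          ring
        have hω1 : ω ≠ 1 := by
          intro h1
          rw [hω, Complex.exp_eq_one_iff] at h1
          obtain ⟨t, ht⟩ := h1
          have h2 : 2*(Real.pi:ℂ)*Complex.I * m = 2*(Real.pi:ℂ)*Complex.I * ((t:ℂ)*(2*(n:ℂ)+1)) := by
            field_simp at ht
            linear_combination (2*(Real.pi:ℂ)*Complex.I) * ht
          have h3 : m = (t:ℂ)*(2*(n:ℂ)+1) :=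
            mul_left_cancel₀ (by simp [hpi, Complex.I_ne_zero]) h2
          rw [hm] at h3
          have h4 : 2*(j:ℤ) - 2*(k:ℤ) = t*(2*(n:ℤ)+1) := by exact_mod_cast h3
          have hdvd : ((2*n+1 : ℤ)) ∣ 2*((j:ℤ)-(k:ℤ)) := ⟨t, by linarith⟩
          have hdvd' : ((2*n+1 : ℕ):ℤ) ∣ 2*((j:ℤ)-(k:ℤ)) := by exact_mod_cast hdvd
          have hdvd2 : (2*n+1) ∣ (2*((j:ℤ)-(k:ℤ))).natAbs := by
            rw [← Int.natAbs_natCast (2*n+1)]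
            exact Int.natAbs_dvd_natAbs.mpr hdvd'
          have hdvd3 : (2*n+1) ∣ ((j:ℤ)-(k:ℤ)).natAbs := by
            have hcop : Nat.Coprime (2*n+1) 2 := Nat.coprime_two_right.mpr ⟨n, by ring⟩
            have : (2*((j:ℤ)-(k:ℤ))).natAbs = 2 * ((j:ℤ)-(k:ℤ)).natAbs := by
              simpa using Int.natAbs_mul 2 ((j:ℤ)-(k:ℤ))
            rw [this] at hdvd2
            exact hcop.dvd_of_dvd_mul_left hdvd2
          have hlt : ((j:ℤ)-(k:ℤ)).natAbs < 2*n+1 := by omega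
          have h0 : ((j:ℤ)-(k:ℤ)).natAbs = 0 := Nat.eq_zero_of_dvd_of_lt hdvd3 hlt
          omega
        have hgeo : ∑ ℓ ∈ Finset.range (2*n+1), ω ^ ℓ = 0 := by
          rw [geom_sum_eq hω1, hωN, sub_self, zero_div]
        rw [hgeo]
        ring
    rw [Finset.sum_congr rfl inner]
    simp [hk]
    rw [if_pos (show k ≤ 2*k by omega)]
    ring
  -- transfer to ℝ
  have h3 : ∑ ℓ ∈ Finset.range (2*n+1), (Real.cos ((θ + 2*Real.pi*ℓ)/(2*n+1)))^(2*k)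
      = (2*(n:ℝ)+1) * ((1/4^k) * (Nat.choose (2*k) k : ℝ)) := by
    apply Complex.ofReal_inj.mp
    push_cast [Complex.ofReal_cos]
    convert key using 2
  rw [h3, one_div, inv_mul_cancel_left₀ hNR]
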